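/- Let α < 0, let β, γ ∈ ℝ, and let M > 0. Then the Schrödinger energy E is unbounded from below on H_M: for every C ∈ ℝ there exists an admissible u ∈ H¹(ℝ²) with ∫_{ℝ²}|u|² dx = M and E[u] < C. -/

import Mathlib

open MeasureTheory Real

noncomputable section

abbrev R2 : Type := EuclideanSpace ℝ (Fin 2)

/-- Admissibility of `u ∈ H¹(ℝ²)` for the Schrödinger energy: all four terms
of the energy are absolutely convergent. -/
def SchAdmissible (u : R2 → ℝ) : Prop :=
  Differentiable ℝ u ∧
  Integrable (fun x : R2 => u x ^ 2) ∧
  Integrable (fun x : R2 => ‖fderiv ℝ u x‖ ^ 2) ∧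
  Integrable (fun x : R2 => Real.log (1 + ‖x‖ ^ 2) * u x ^ 2) ∧
  Integrable (fun p : R2 × R2 => u p.1 ^ 2 * u p.2 ^ 2 * Real.log ‖p.1 - p.2‖) ∧
  Integrable (fun x : R2 => u x ^ 2 * Real.log (u x ^ 2))

/-- The Schrödinger energy `E[u]` with external potential `V(x) = 2 log(1+|x|²)`,
Poisson interaction with coupling `β` and logarithmic nonlinearity `γ`. -/
def SchEnergy (α β γ : ℝ) (u : R2 → ℝ) : ℝ :=
  (∫ x : R2, ‖fderiv ℝ u x‖ ^ 2) +
    α * (∫ x : R2, 2 * Real.log (1 + ‖x‖ ^ 2) * u x ^ 2) -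
    β * (∫ p : R2 × R2, u p.1 ^ 2 * u p.2 ^ 2 * Real.log ‖p.1 - p.2‖) +
    γ * ∫ x : R2, u x ^ 2 * Real.log (u x ^ 2)

namespace SchAux

open Metric Set Function

/-- Local integrability of `log ‖z‖` on the unit ball in 2D, via the layer cake formula. -/
lemma integrableOn_log_ball : IntegrableOn (fun z : R2 => Real.log ‖z‖) (ball (0 : R2) 1) := by
  have hmeas : Measurable (fun z : R2 => Real.log ‖z‖) :=
    Real.measurable_log.comp measurable_norm
  refine ⟨hmeas.aestronglyMeasurable, ?_⟩
  rw [hasFiniteIntegral_iff_norm]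
  have key := lintegral_eq_lintegral_meas_lt (volume.restrict (ball (0 : R2) 1))
    (f := fun z : R2 => ‖Real.log ‖z‖‖)
    (Filter.Eventually.of_forall fun z => norm_nonneg _) hmeas.norm.aemeasurable
  rw [key]
  have hbound : ∀ t ∈ Ioi (0 : ℝ),
      (volume.restrict (ball (0 : R2) 1)) {z : R2 | t < ‖Real.log ‖z‖‖}
        ≤ ENNReal.ofReal (π * Real.exp (-(2 * t))) := by
    intro t ht
    rw [Measure.restrict_apply' measurableSet_ball]
    have hsub : {z : R2 | t < ‖Real.log ‖z‖‖} ∩ ball (0 : R2) 1 ⊆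
        ball (0 : R2) (Real.exp (-t)) := by
      intro z hz
      obtain ⟨hz1, hz2⟩ := hz
      rw [mem_ball_zero_iff] at hz2 ⊢
      rcases eq_or_ne z 0 with rfl | hz0
      · exfalso
        simp only [mem_setOf_eq, norm_zero, Real.log_zero, norm_zero] at hz1
        exact absurd hz1 (not_lt.2 (le_of_lt ht))
      · have hpos : 0 < ‖z‖ := norm_pos_iff.2 hz0
        have hlogle : Real.log ‖z‖ ≤ 0 := Real.log_nonpos (norm_nonneg _) hz2.le
        have habs : ‖Real.log ‖z‖‖ = -Real.log ‖z‖ := by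
          rw [Real.norm_eq_abs, abs_of_nonpos hlogle]
        rw [mem_setOf_eq, habs] at hz1
        have : Real.log ‖z‖ < -t := by linarith
        rwa [Real.log_lt_iff_lt_exp hpos] at this
    calc volume ({z : R2 | t < ‖Real.log ‖z‖‖} ∩ ball (0 : R2) 1)
        ≤ volume (ball (0 : R2) (Real.exp (-t))) := measure_mono hsub
      _ = ENNReal.ofReal (π * Real.exp (-(2 * t))) := by
          rw [EuclideanSpace.volume_ball]
          have hcard : Fintype.card (Fin 2) = 2 := by simp
          rw [hcard]
          have h1 : Real.Gamma (((2:ℕ) : ℝ) / 2 + 1) = 1 := by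
            norm_num [Real.Gamma_two]
          have h2 : Real.sqrt π ^ 2 = π := Real.sq_sqrt (le_of_lt Real.pi_pos)
          rw [h1, h2]
          rw [← ENNReal.ofReal_pow (Real.exp_nonneg _)]
          rw [← ENNReal.ofReal_mul (by positivity)]
          norm_num
          rw [← Real.exp_nat_mul]
          push_cast
          rw [show (2 : ℝ) * -t = -(2 * t) by ring]
          ring_nf
  have hle : ∫⁻ t in Ioi (0 : ℝ),
      (volume.restrict (ball (0 : R2) 1)) {z : R2 | t < ‖Real.log ‖z‖‖}
      ≤ ∫⁻ t in Ioi (0 : ℝ), ENNReal.ofReal (π * Real.exp (-(2 * t))) := by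
    apply lintegral_mono_ae
    filter_upwards [ae_restrict_mem measurableSet_Ioi] with t ht
    exact hbound t ht
  refine lt_of_le_of_lt hle ?_
  have hint : IntegrableOn (fun t : ℝ => π * Real.exp (-(2 * t))) (Ioi (0 : ℝ)) := by
    have h := (exp_neg_integrableOn_Ioi (0 : ℝ) (by norm_num : (0:ℝ) < 2)).const_mul π
    have he : (fun t : ℝ => π * Real.exp (-2 * t)) = fun t : ℝ => π * Real.exp (-(2 * t)) := by
      funext t; rw [neg_mul]
    rwa [he] at h
  rw [← ofReal_integral_eq_lintegral_ofReal hint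
    (Filter.Eventually.of_forall fun t => by positivity)]
  exact ENNReal.ofReal_lt_top

/-- The fixed bump function on `ℝ²`. -/
def phi : ContDiffBump (0 : R2) := ⟨1/4, 1/2, by norm_num, by norm_num⟩

lemma phi_rOut : phi.rOut = 1/2 := rfl
lemma phi_rIn : phi.rIn = 1/4 := rfl

/-- The trial functions: scaled translated bumps. -/
def U (k : ℝ) (v : R2) : R2 → ℝ := fun x => k * phi (x - v)

lemma U_contDiff (k : ℝ) (v : R2) : ContDiff ℝ ((⊤ : ℕ∞) : WithTop ℕ∞) (U k v) := by
  apply ContDiff.mul contDiff_const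
  have h1 : ContDiff ℝ ((⊤ : ℕ∞) : WithTop ℕ∞) (fun x : R2 => x - v) :=
    contDiff_id.sub contDiff_const
  exact (phi.contDiff (n := ⊤)).comp h1

lemma U_continuous (k : ℝ) (v : R2) : Continuous (U k v) :=
  (U_contDiff k v).continuous

lemma U_diff (k : ℝ) (v : R2) : Differentiable ℝ (U k v) :=
  (U_contDiff k v).differentiable (by simp)

lemma U_zero_of_far {k : ℝ} {v x : R2} (h : ‖x - v‖ ≥ 1/2) : U k v x = 0 := by
  have : phi (x - v) = 0 := by
    apply phi.zero_of_le_dist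
    rw [phi_rOut, dist_zero_right]
    exact h
  simp [U, this]

lemma U_near_of_ne_zero {k : ℝ} {v x : R2} (h : U k v x ≠ 0) : ‖x - v‖ < 1/2 := by
  by_contra hc
  exact h (U_zero_of_far (not_lt.1 hc))

lemma U_hcs (k : ℝ) (v : R2) : HasCompactSupport (U k v) := by
  apply HasCompactSupport.intro (isCompact_closedBall v (1/2))
  intro x hx
  apply U_zero_of_far
  rw [mem_closedBall, dist_eq_norm] at hx
  exact le_of_lt (not_le.1 hx)

lemma U_abs_le (k : ℝ) (v : R2) (x : R2) : |U k v x| ≤ |k| := by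
  rw [U, abs_mul]
  calc |k| * |phi (x - v)| ≤ |k| * 1 := by
        apply mul_le_mul_of_nonneg_left _ (abs_nonneg k)
        rw [abs_of_nonneg phi.nonneg]
        exact phi.le_one
    _ = |k| := mul_one _

lemma U_sq_le (k : ℝ) (v : R2) (x : R2) : U k v x ^ 2 ≤ k ^ 2 := by
  rw [← sq_abs (U k v x), ← sq_abs k]
  exact pow_le_pow_left₀ (abs_nonneg _) (U_abs_le k v x) 2

lemma U_sq_integrable (k : ℝ) (v : R2) : Integrable (fun x : R2 => U k v x ^ 2) := by
  apply Continuous.integrable_of_hasCompactSupport ((U_continuous k v).pow 2)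
  apply HasCompactSupport.intro (isCompact_closedBall v (1/2))
  intro x hx
  rw [mem_closedBall, dist_eq_norm] at hx
  rw [Pi.pow_apply, U_zero_of_far (le_of_lt (not_le.1 hx))]
  ring

lemma U_fderiv_sq_integrable (k : ℝ) (v : R2) :
    Integrable (fun x : R2 => ‖fderiv ℝ (U k v) x‖ ^ 2) := by
  have hconts : Continuous (fun x : R2 => fderiv ℝ (U k v) x) :=
    (U_contDiff k v).continuous_fderiv (by simp)
  apply Continuous.integrable_of_hasCompactSupport ((hconts.norm).pow 2)
  have hcs : HasCompactSupport (fderiv ℝ (U k v)) := HasCompactSupport.fderiv (𝕜 := ℝ) (U_hcs k v)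
  have : HasCompactSupport (fun x : R2 => ‖fderiv ℝ (U k v) x‖ ^ 2) := by
    have := hcs.comp_left (g := fun y : R2 →L[ℝ] ℝ => ‖y‖ ^ 2) (by simp)
    exact this
  exact this

lemma U_pot_integrable (k : ℝ) (v : R2) :
    Integrable (fun x : R2 => Real.log (1 + ‖x‖ ^ 2) * U k v x ^ 2) := by
  have hcont : Continuous (fun x : R2 => Real.log (1 + ‖x‖ ^ 2) * U k v x ^ 2) := by
    apply Continuous.mul _ ((U_continuous k v).pow 2)
    apply Continuous.log (by continuity)
    intro x
    positivity
  apply hcont.integrable_of_hasCompactSupport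
  apply HasCompactSupport.intro (isCompact_closedBall v (1/2))
  intro x hx
  rw [mem_closedBall, dist_eq_norm] at hx
  rw [U_zero_of_far (le_of_lt (not_le.1 hx))]
  ring

lemma U_ent_integrable (k : ℝ) (v : R2) :
    Integrable (fun x : R2 => U k v x ^ 2 * Real.log (U k v x ^ 2)) := by
  have hcont : Continuous (fun x : R2 => U k v x ^ 2 * Real.log (U k v x ^ 2)) :=
    Real.continuous_mul_log.comp ((U_continuous k v).pow 2)
  apply hcont.integrable_of_hasCompactSupport
  apply HasCompactSupport.intro (isCompact_closedBall v (1/2))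
  intro x hx
  rw [mem_closedBall, dist_eq_norm] at hx
  rw [U_zero_of_far (le_of_lt (not_le.1 hx))]
  simp

lemma U_inter_integrable (k : ℝ) (v : R2) :
    Integrable (fun p : R2 × R2 => U k v p.1 ^ 2 * U k v p.2 ^ 2 * Real.log ‖p.1 - p.2‖) := by
  set u := U k v with hu
  have humeas : Measurable u := (U_continuous k v).measurable
  have hFmeas : AEStronglyMeasurable
      (fun p : R2 × R2 => u p.1 ^ 2 * u p.2 ^ 2 * Real.log ‖p.1 - p.2‖) volume := by
    apply Measurable.aestronglyMeasurable
    exact (((humeas.comp measurable_fst).pow_const 2).mul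
      ((humeas.comp measurable_snd).pow_const 2)).mul
      (Real.measurable_log.comp (measurable_fst.sub measurable_snd).norm)
  set g : R2 → ℝ := (ball (0 : R2) 1).indicator (fun z => -Real.log ‖z‖) with hg
  have hg_int : Integrable g := by
    have hneg : IntegrableOn (fun z : R2 => -Real.log ‖z‖) (ball (0 : R2) 1) :=
      integrableOn_log_ball.neg
    exact MeasureTheory.IntegrableOn.integrable_indicator hneg measurableSet_ball
  have hg_nonneg : ∀ z, 0 ≤ g z := by
    intro z
    rw [hg]
    apply indicator_nonneg
    intro y hy
    rw [mem_ball_zero_iff] at hy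
    have := Real.log_nonpos (norm_nonneg y) hy.le
    linarith
  have hconv : Integrable
      (fun p : R2 × R2 => (ContinuousLinearMap.mul ℝ ℝ) (u p.2 ^ 2) (g (p.1 - p.2)))
      (volume.prod volume) :=
    (U_sq_integrable k v).convolution_integrand (ContinuousLinearMap.mul ℝ ℝ) hg_int
  have hconv' : Integrable (fun p : R2 × R2 => u p.2 ^ 2 * g (p.1 - p.2)) := by
    rw [show (volume : Measure (R2 × R2)) = volume.prod volume from Measure.volume_eq_prod R2 R2]
    simpa using hconv
  apply Integrable.mono' (hconv'.const_mul (k ^ 2)) hFmeas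
  apply Filter.Eventually.of_forall
  intro p
  rcases eq_or_ne (u p.1) 0 with h1 | h1
  · rw [h1]
    have : (0:ℝ) ^ 2 * u p.2 ^ 2 * Real.log ‖p.1 - p.2‖ = 0 := by ring
    rw [this, norm_zero]
    have := hg_nonneg (p.1 - p.2)
    positivity
  rcases eq_or_ne (u p.2) 0 with h2 | h2
  · rw [h2]
    have : u p.1 ^ 2 * (0:ℝ) ^ 2 * Real.log ‖p.1 - p.2‖ = 0 := by ring
    rw [this, norm_zero]
    have := hg_nonneg (p.1 - p.2)
    positivity
  · have hn1 : ‖p.1 - v‖ < 1/2 := U_near_of_ne_zero h1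
    have hn2 : ‖p.2 - v‖ < 1/2 := U_near_of_ne_zero h2
    have hdist : ‖p.1 - p.2‖ < 1 := by
      have : p.1 - p.2 = (p.1 - v) - (p.2 - v) := by abel
      rw [this]
      calc ‖(p.1 - v) - (p.2 - v)‖ ≤ ‖p.1 - v‖ + ‖p.2 - v‖ := norm_sub_le _ _
        _ < 1 := by linarith
    have hgval : g (p.1 - p.2) = -Real.log ‖p.1 - p.2‖ := by
      rw [hg, indicator_of_mem (mem_ball_zero_iff.2 hdist)]
    have hlognp : Real.log ‖p.1 - p.2‖ ≤ 0 := Real.log_nonpos (norm_nonneg _) hdist.le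
    rw [Real.norm_eq_abs, abs_mul, abs_of_nonpos hlognp, hgval]
    have habs : |u p.1 ^ 2 * u p.2 ^ 2| = u p.1 ^ 2 * u p.2 ^ 2 := by
      apply abs_of_nonneg; positivity
    rw [habs]
    have hb1 : u p.1 ^ 2 ≤ k ^ 2 := U_sq_le k v p.1
    have hb2 : (0:ℝ) ≤ u p.2 ^ 2 := sq_nonneg _
    have hb3 : (0:ℝ) ≤ -Real.log ‖p.1 - p.2‖ := by linarith
    rw [mul_assoc]
    exact mul_le_mul_of_nonneg_right hb1 (mul_nonneg hb2 hb3)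

lemma U_admissible (k : ℝ) (v : R2) : SchAdmissible (U k v) :=
  ⟨U_diff k v, U_sq_integrable k v, U_fderiv_sq_integrable k v, U_pot_integrable k v,
    U_inter_integrable k v, U_ent_integrable k v⟩

/-- mass of the unscaled bump -/
def I0 : ℝ := ∫ x : R2, phi x ^ 2

lemma U_one_zero_eq : (fun x : R2 => U 1 0 x ^ 2) = fun x : R2 => phi x ^ 2 := by
  funext x
  simp [U]

lemma phi_sq_integrable : Integrable (fun x : R2 => phi x ^ 2) := by
  rw [← U_one_zero_eq]
  exact U_sq_integrable 1 0

lemma I0_pos : 0 < I0 := by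
  have hint := phi_sq_integrable
  have h1 : ∫ x in closedBall (0 : R2) (1/4), phi x ^ 2 =
      (volume (closedBall (0 : R2) (1/4))).toReal := by
    rw [setIntegral_congr_fun measurableSet_closedBall
      (g := fun _ => (1:ℝ)) (fun x hx => by
        rw [phi.one_of_mem_closedBall (by rwa [phi_rIn])]; norm_num)]
    simp [Measure.real]
  have h2 : ∫ x in closedBall (0 : R2) (1/4), phi x ^ 2 ≤ ∫ x : R2, phi x ^ 2 :=
    setIntegral_le_integral hint (Filter.Eventually.of_forall fun x => sq_nonneg _)
  have h3 : 0 < (volume (closedBall (0 : R2) (1/4))).toReal := by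
    apply ENNReal.toReal_pos
    · have := measure_ball_pos volume (0 : R2) (by norm_num : (0:ℝ) < 1/4)
      exact ne_of_gt (lt_of_lt_of_le this (measure_mono ball_subset_closedBall))
    · exact ne_of_lt measure_closedBall_lt_top
  rw [I0]
  linarith [h1 ▸ h2]

/-- translation invariance: derivative of translate -/
lemma fderiv_translate (f : R2 → ℝ) (hf : Differentiable ℝ f) (v x : R2) :
    fderiv ℝ (fun y : R2 => f (y - v)) x = fderiv ℝ f (x - v) := by
  have h : HasFDerivAt (fun y : R2 => f (y - v)) (fderiv ℝ f (x - v)) x := by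
    have h2 := (hf (x - v)).hasFDerivAt.comp x ((hasFDerivAt_id x).sub_const v)
    exact h2
  exact h.fderiv

/-- base (untranslated) profile -/
def u₀ (k : ℝ) : R2 → ℝ := fun x => k * phi x

lemma U_eq_translate (k : ℝ) (v : R2) : U k v = fun x : R2 => u₀ k (x - v) := rfl

lemma integral_translate (f : R2 → ℝ) (v : R2) :
    ∫ x : R2, f (x - v) = ∫ x : R2, f x :=
  integral_sub_right_eq_self f v

lemma u₀_diff (k : ℝ) : Differentiable ℝ (u₀ k) := by
  have h : ContDiff ℝ ((⊤ : ℕ∞) : WithTop ℕ∞) (u₀ k) :=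
    contDiff_const.mul (phi.contDiff (n := ⊤))
  exact h.differentiable (by simp)

lemma kinetic_translate (k : ℝ) (v : R2) :
    ∫ x : R2, ‖fderiv ℝ (U k v) x‖ ^ 2 = ∫ x : R2, ‖fderiv ℝ (u₀ k) x‖ ^ 2 := by
  have h1 : (fun x : R2 => ‖fderiv ℝ (U k v) x‖ ^ 2) =
      fun x : R2 => ‖fderiv ℝ (u₀ k) (x - v)‖ ^ 2 := by
    funext x
    rw [U_eq_translate, fderiv_translate (u₀ k) (u₀_diff k) v x]
  rw [h1]
  exact integral_translate (fun x => ‖fderiv ℝ (u₀ k) x‖ ^ 2) v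

lemma mass_translate (k : ℝ) (v : R2) :
    ∫ x : R2, U k v x ^ 2 = ∫ x : R2, u₀ k x ^ 2 :=
  integral_translate (fun x => u₀ k x ^ 2) v

lemma ent_translate (k : ℝ) (v : R2) :
    ∫ x : R2, U k v x ^ 2 * Real.log (U k v x ^ 2) =
      ∫ x : R2, u₀ k x ^ 2 * Real.log (u₀ k x ^ 2) :=
  integral_translate (fun x => u₀ k x ^ 2 * Real.log (u₀ k x ^ 2)) v

instance : (volume : Measure (R2 × R2)).IsAddRightInvariant :=
  Measure.prod.instIsAddRightInvariant

lemma inter_translate (k : ℝ) (v : R2) :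
    ∫ p : R2 × R2, U k v p.1 ^ 2 * U k v p.2 ^ 2 * Real.log ‖p.1 - p.2‖ =
      ∫ p : R2 × R2, u₀ k p.1 ^ 2 * u₀ k p.2 ^ 2 * Real.log ‖p.1 - p.2‖ := by
  have h1 : (fun p : R2 × R2 => U k v p.1 ^ 2 * U k v p.2 ^ 2 * Real.log ‖p.1 - p.2‖) =
      fun p : R2 × R2 => (fun q : R2 × R2 =>
        u₀ k q.1 ^ 2 * u₀ k q.2 ^ 2 * Real.log ‖q.1 - q.2‖) (p - (v, v)) := by
    funext p
    simp only [U_eq_translate, Prod.fst_sub, Prod.snd_sub]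
    congr 2
    abel
  rw [h1]
  exact integral_sub_right_eq_self
    (fun q : R2 × R2 => u₀ k q.1 ^ 2 * u₀ k q.2 ^ 2 * Real.log ‖q.1 - q.2‖) ((v, v) : R2 × R2)

lemma mass_U (k : ℝ) (v : R2) : ∫ x : R2, U k v x ^ 2 = k ^ 2 * I0 := by
  rw [mass_translate]
  have : (fun x : R2 => u₀ k x ^ 2) = fun x : R2 => k ^ 2 * phi x ^ 2 := by
    funext x; rw [u₀]; ring
  rw [this, integral_const_mul, I0]

end SchAux

open SchAux Metric Set Function

theorem stmt_15 (α β γ M : ℝ) (hα : α < 0) (hM : 0 < M) :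
    ∀ C : ℝ, ∃ u : R2 → ℝ, SchAdmissible u ∧ (∫ x : R2, u x ^ 2) = M ∧
      SchEnergy α β γ u < C := by
  intro C
  -- normalization
  set k : ℝ := Real.sqrt (M / I0) with hk
  have hI0 := I0_pos
  have hk2 : k ^ 2 = M / I0 := Real.sq_sqrt (by positivity)
  have hmassval : ∀ v : R2, ∫ x : R2, U k v x ^ 2 = M := by
    intro v
    rw [mass_U, hk2]
    field_simp
  -- the constants
  set A0 : ℝ := ∫ x : R2, ‖fderiv ℝ (u₀ k) x‖ ^ 2 with hA0
  set B0 : ℝ := ∫ p : R2 × R2, u₀ k p.1 ^ 2 * u₀ k p.2 ^ 2 * Real.log ‖p.1 - p.2‖ with hB0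
  set G0 : ℝ := ∫ x : R2, u₀ k x ^ 2 * Real.log (u₀ k x ^ 2) with hG0
  set K : ℝ := A0 - β * B0 + γ * G0 with hKdef
  -- choose the translation distance
  set T : ℝ := max 1 ((K - C + 1) / (2 * M * (-α))) with hT
  have hT1 : (1:ℝ) ≤ T := le_max_left _ _
  have hTge : (K - C + 1) / (2 * M * (-α)) ≤ T := le_max_right _ _
  set R : ℝ := 1 + Real.sqrt (Real.exp T) with hR
  have hR1 : 1 ≤ R := by
    rw [hR]
    have := Real.sqrt_nonneg (Real.exp T)
    linarith
  set v : R2 := EuclideanSpace.single (0 : Fin 2) R with hv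
  have hvnorm : ‖v‖ = R := by
    rw [hv, EuclideanSpace.norm_single, Real.norm_eq_abs, abs_of_nonneg (by linarith)]
  refine ⟨U k v, U_admissible k v, hmassval v, ?_⟩
  -- the potential lower bound
  set L : ℝ := Real.log (1 + (R - 1) ^ 2) with hL
  have hLT : T ≤ L := by
    rw [hL, hR]
    have h1 : (1 + Real.sqrt (Real.exp T) - 1) ^ 2 = Real.exp T := by
      rw [add_sub_cancel_left, Real.sq_sqrt (Real.exp_nonneg T)]
    rw [h1]
    calc T = Real.log (Real.exp T) := (Real.log_exp T).symm
      _ ≤ Real.log (1 + Real.exp T) := by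
          apply Real.log_le_log (Real.exp_pos T)
          linarith
  have hLpos : 0 < L := lt_of_lt_of_le (by linarith) hLT
  have hpot : 2 * L * M ≤ ∫ x : R2, 2 * Real.log (1 + ‖x‖ ^ 2) * U k v x ^ 2 := by
    have hint1 : Integrable (fun x : R2 => 2 * L * U k v x ^ 2) :=
      (U_sq_integrable k v).const_mul (2 * L)
    have hint2 : Integrable (fun x : R2 => 2 * Real.log (1 + ‖x‖ ^ 2) * U k v x ^ 2) := by
      have h := (U_pot_integrable k v).const_mul 2
      have he : (fun x : R2 => 2 * (Real.log (1 + ‖x‖ ^ 2) * U k v x ^ 2)) =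
          fun x : R2 => 2 * Real.log (1 + ‖x‖ ^ 2) * U k v x ^ 2 := by
        funext x; ring
      rwa [he] at h
    have hptwise : ∀ x : R2, 2 * L * U k v x ^ 2 ≤
        2 * Real.log (1 + ‖x‖ ^ 2) * U k v x ^ 2 := by
      intro x
      rcases eq_or_ne (U k v x) 0 with h0 | h0
      · rw [h0]; ring_nf; exact le_refl _
      · have hnear : ‖x - v‖ < 1/2 := U_near_of_ne_zero h0
        have hnx : R - 1 ≤ ‖x‖ := by
          have h1 : ‖v‖ - ‖x - v‖ ≤ ‖x‖ := by
            have := norm_sub_norm_le v x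
            have h2 : ‖v - x‖ = ‖x - v‖ := norm_sub_rev v x
            linarith [norm_sub_norm_le v x, h2 ▸ this]
          rw [hvnorm] at h1
          linarith
        have hsq : (R - 1) ^ 2 ≤ ‖x‖ ^ 2 := by
          apply pow_le_pow_left₀ (by linarith) hnx
        have hlog : L ≤ Real.log (1 + ‖x‖ ^ 2) := by
          rw [hL]
          apply Real.log_le_log (by positivity)
          linarith
        have hu2 : (0:ℝ) ≤ U k v x ^ 2 := sq_nonneg _
        nlinarith
    calc 2 * L * M = ∫ x : R2, 2 * L * U k v x ^ 2 := by
          rw [integral_const_mul, hmassval v]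
      _ ≤ ∫ x : R2, 2 * Real.log (1 + ‖x‖ ^ 2) * U k v x ^ 2 :=
          integral_mono hint1 hint2 hptwise
  -- assemble
  have henergy : SchEnergy α β γ (U k v) =
      A0 + α * (∫ x : R2, 2 * Real.log (1 + ‖x‖ ^ 2) * U k v x ^ 2) - β * B0 + γ * G0 := by
    rw [SchEnergy, kinetic_translate, inter_translate, ent_translate]
  rw [henergy]
  have hαP : α * (∫ x : R2, 2 * Real.log (1 + ‖x‖ ^ 2) * U k v x ^ 2) ≤ α * (2 * L * M) := by
    apply mul_le_mul_of_nonpos_left hpot (le_of_lt hα)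
  have hfin : α * (2 * L * M) ≤ α * (2 * T * M) := by
    apply mul_le_mul_of_nonpos_left _ (le_of_lt hα)
    nlinarith
  have hchoice : K + α * (2 * T * M) ≤ C - 1 := by
    have hpos : 0 < 2 * M * (-α) := by nlinarith
    have := (div_le_iff₀ hpos).1 hTge
    nlinarith
  have : A0 + α * (2 * T * M) - β * B0 + γ * G0 ≤ C - 1 := by
    rw [hKdef] at hchoice
    linarith
  linarith

end
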